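/- Let F be a finite field with q elements and let a ∈ F be nonzero. Then the number of 2×2 matrices X over F satisfying X² = a•X is exactly q² + q + 2. -/

import Mathlib

open Finset

def P1cond {F : Type*} [Field F] (a : F) (p : F × F × F × F) : Prop :=
  p.2.1 = 0 ∧ p.2.2.1 = 0 ∧ (p.1 = 0 ∨ p.1 = a) ∧ (p.2.2.2 = 0 ∨ p.2.2.2 = a)

def P2cond {F : Type*} [Field F] (a : F) (p : F × F × F × F) : Prop :=
  ¬(p.2.1 = 0 ∧ p.2.2.1 = 0) ∧ p.2.2.2 = a - p.1 ∧ p.2.1 * p.2.2.1 = p.1 * (a - p.1)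

section
variable {F : Type*} [Field F] [Fintype F] [DecidableEq F]

omit [Fintype F] [DecidableEq F] in
lemma entry_iff (a : F) (X : Matrix (Fin 2) (Fin 2) F) :
    X * X = a • X ↔ (X 0 0 * X 0 0 + X 0 1 * X 1 0 = a * X 0 0 ∧
                     X 0 0 * X 0 1 + X 0 1 * X 1 1 = a * X 0 1 ∧
                     X 1 0 * X 0 0 + X 1 1 * X 1 0 = a * X 1 0 ∧
                     X 1 0 * X 0 1 + X 1 1 * X 1 1 = a * X 1 1) := by
  rw [← Matrix.ext_iff]
  simp [Matrix.mul_apply, Fin.sum_univ_two, Fin.forall_fin_two, Matrix.smul_apply, smul_eq_mul]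
  tauto

omit [Fintype F] [DecidableEq F] in
lemma pred_iff (a : F) (x y z w : F) :
    (x * x + y * z = a * x ∧ x * y + y * w = a * y ∧
     z * x + w * z = a * z ∧ z * y + w * w = a * w) ↔
    (P1cond a (x, y, z, w) ∨ P2cond a (x, y, z, w)) := by
  unfold P1cond P2cond
  simp only
  constructor
  · rintro ⟨h1, h2, h3, h4⟩
    by_cases hyz : y = 0 ∧ z = 0
    · left
      obtain ⟨hy, hz⟩ := hyz
      subst hy; subst hz
      refine ⟨rfl, rfl, ?_, ?_⟩
      · have hx : x * (x - a) = 0 := by linear_combination h1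
        rcases mul_eq_zero.mp hx with h | h
        · exact Or.inl h
        · exact Or.inr (sub_eq_zero.mp h)
      · have hw : w * (w - a) = 0 := by linear_combination h4
        rcases mul_eq_zero.mp hw with h | h
        · exact Or.inl h
        · exact Or.inr (sub_eq_zero.mp h)
    · right
      have ht : x + w - a = 0 := by
        rcases not_and_or.mp hyz with hy | hz
        · have h : y * (x + w - a) = 0 := by linear_combination h2
          rcases mul_eq_zero.mp h with h | h
          · exact absurd h hy
          · exact h
        · have h : z * (x + w - a) = 0 := by linear_combination h3
          rcases mul_eq_zero.mp h with h | h
          · exact absurd h hz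
          · exact h
      exact ⟨hyz, by linear_combination ht, by linear_combination h1⟩
  · rintro (⟨rfl, rfl, hx, hw⟩ | ⟨hyz, rfl, h⟩)
    · rcases hx with rfl | rfl <;> rcases hw with rfl | rfl <;>
        exact ⟨by ring, by ring, by ring, by ring⟩
    · exact ⟨by linear_combination h, by ring, by ring, by linear_combination h⟩

lemma card_ne_zero' : Nat.card {y : F // y ≠ 0} = Fintype.card F - 1 := by
  rw [Nat.card_eq_fintype_card, Fintype.card_subtype]
  rw [show (univ.filter fun y : F => y ≠ 0) = univ.erase 0 from filter_ne' _ _]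
  rw [card_erase_of_mem (mem_univ 0), card_univ]

lemma fiber_ne (c : F) (hc : c ≠ 0) :
    Nat.card {p : F × F // p.1 * p.2 = c ∧ ¬(p.1 = 0 ∧ p.2 = 0)} = Fintype.card F - 1 := by
  rw [← card_ne_zero' (F := F)]
  apply Nat.card_congr
  refine ⟨fun p => ⟨p.1.1, fun h0 => hc (by rw [← p.2.1, h0, zero_mul])⟩,
          fun y => ⟨(y.1, y.1⁻¹ * c),
            by rw [← mul_assoc, mul_inv_cancel₀ y.2, one_mul],
            fun h => y.2 h.1⟩, ?_, ?_⟩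
  · rintro ⟨⟨y, z⟩, h, hne⟩
    have hy : y ≠ 0 := fun h0 => hc (by rw [← h, h0, zero_mul])
    ext <;> simp
    rw [← h, ← mul_assoc, inv_mul_cancel₀ hy, one_mul]
  · rintro ⟨y, hy⟩; rfl

lemma fiber_zero :
    Nat.card {p : F × F // p.1 * p.2 = 0 ∧ ¬(p.1 = 0 ∧ p.2 = 0)} =
      2 * (Fintype.card F - 1) := by
  rw [Nat.card_eq_fintype_card, Fintype.card_subtype]
  have h : (univ.filter fun p : F × F => p.1 * p.2 = 0 ∧ ¬(p.1 = 0 ∧ p.2 = 0)) =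
      (({0} : Finset F) ×ˢ univ.erase 0) ∪ ((univ.erase 0) ×ˢ ({0} : Finset F)) := by
    ext ⟨y, z⟩
    simp [mul_eq_zero]
    tauto
  rw [h, card_union_of_disjoint, card_product, card_product]
  · rw [card_singleton, card_erase_of_mem (mem_univ 0), card_univ]
    ring
  · rw [disjoint_left]
    rintro ⟨y, z⟩ h1 h2
    simp at h1 h2
    tauto

lemma card_P1 (a : F) (ha : a ≠ 0) :
    Nat.card {p : F × F × F × F // P1cond a p} = 4 := by
  classical
  rw [Nat.card_eq_fintype_card, Fintype.card_subtype]
  have h : (univ.filter fun p : F × F × F × F => P1cond a p) =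
      ({(0, 0, 0, 0), (0, 0, 0, a), (a, 0, 0, 0), (a, 0, 0, a)} : Finset (F × F × F × F)) := by
    ext ⟨x, y, z, w⟩
    rw [mem_filter]
    simp [P1cond, Prod.ext_iff]
    tauto
  rw [h]
  rw [card_insert_of_notMem, card_insert_of_notMem, card_insert_of_notMem, card_singleton]
  · simp [Prod.ext_iff, ha, Ne.symm ha]
  · simp [Prod.ext_iff, ha, Ne.symm ha]
  · simp [Prod.ext_iff, ha, Ne.symm ha]

lemma card_P2 (a : F) (ha : a ≠ 0) :
    Nat.card {p : F × F × F × F // P2cond a p} =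
      2 * (2 * (Fintype.card F - 1)) + (Fintype.card F - 2) * (Fintype.card F - 1) := by
  have e2 : {p : F × F × F × F // P2cond a p} ≃
      Σ x : F, {yz : F × F // yz.1 * yz.2 = x * (a - x) ∧ ¬(yz.1 = 0 ∧ yz.2 = 0)} := by
    refine ⟨fun p => ⟨p.1.1, (p.1.2.1, p.1.2.2.1), p.2.2.2, p.2.1⟩,
            fun s => ⟨(s.1, s.2.1.1, s.2.1.2, a - s.1), s.2.2.2, rfl, s.2.2.1⟩, ?_, ?_⟩
    · rintro ⟨⟨x, y, z, w⟩, hne, hw, hv⟩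
      simp only at hw
      subst hw
      rfl
    · rintro ⟨x, ⟨y, z⟩, h⟩
      rfl
  rw [Nat.card_congr e2, Nat.card_eq_fintype_card, Fintype.card_sigma]
  have hfib : ∀ x : F, Fintype.card {yz : F × F // yz.1 * yz.2 = x * (a - x) ∧ ¬(yz.1 = 0 ∧ yz.2 = 0)} =
      if x = 0 ∨ x = a then 2 * (Fintype.card F - 1) else Fintype.card F - 1 := by
    intro x
    rw [← Nat.card_eq_fintype_card]
    by_cases hx : x = 0 ∨ x = a
    · rw [if_pos hx]
      have hc : x * (a - x) = 0 := by
        rcases hx with rfl | rfl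
        · ring
        · ring
      rw [hc]
      exact fiber_zero
    · rw [if_neg hx]
      push_neg at hx
      have hc : x * (a - x) ≠ 0 :=
        mul_ne_zero hx.1 (sub_ne_zero.mpr (Ne.symm hx.2))
      exact fiber_ne _ hc
  rw [Finset.sum_congr rfl (fun x _ => hfib x)]
  rw [Finset.sum_ite, Finset.sum_const, Finset.sum_const, smul_eq_mul, smul_eq_mul]
  have h1 : (univ.filter fun x : F => x = 0 ∨ x = a) = ({0, a} : Finset F) := by
    ext x; simp
  have h2 : ({0, a} : Finset F).card = 2 := by
    rw [card_insert_of_notMem (by simp [Ne.symm ha]), card_singleton]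
  have h3 : (univ.filter fun x : F => ¬(x = 0 ∨ x = a)).card = Fintype.card F - 2 := by
    have := Finset.card_filter_add_card_filter_not
      (s := (univ : Finset F)) (p := fun x : F => x = 0 ∨ x = a)
    rw [h1, h2] at this
    rw [card_univ] at this
    omega
  rw [h1, h2, h3]

end

theorem stmt_1 (F : Type*) [Field F] [Fintype F] (a : F) (ha : a ≠ 0) :
    Nat.card {X : Matrix (Fin 2) (Fin 2) F | X * X = a • X} =
      Fintype.card F ^ 2 + Fintype.card F + 2 := by
  classical
  have eA : {p : F × F × F × F // P1cond a p ∨ P2cond a p} ≃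
      {X : Matrix (Fin 2) (Fin 2) F // X * X = a • X} := by
    refine ⟨fun p => ⟨!![p.1.1, p.1.2.1; p.1.2.2.1, p.1.2.2.2], ?_⟩,
            fun X => ⟨(X.1 0 0, X.1 0 1, X.1 1 0, X.1 1 1), ?_⟩, ?_, ?_⟩
    · rw [entry_iff]
      simpa using (pred_iff a p.1.1 p.1.2.1 p.1.2.2.1 p.1.2.2.2).mpr p.2
    · exact (pred_iff a _ _ _ _).mp ((entry_iff a X.1).mp X.2)
    · rintro ⟨⟨x, y, z, w⟩, h⟩
      simp
    · rintro ⟨X, h⟩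
      ext i j
      simp only
      rw [Matrix.eta_fin_two X]
      simp
  have hsplit : Nat.card {p : F × F × F × F // P1cond a p ∨ P2cond a p} =
      Nat.card {p : F × F × F × F // P1cond a p} + Nat.card {p : F × F × F × F // P2cond a p} := by
    simp only [Nat.card_eq_fintype_card, Fintype.card_subtype]
    rw [filter_or, card_union_of_disjoint]
    rw [disjoint_left]
    rintro p h1 h2
    simp only [mem_filter] at h1 h2
    exact h2.2.1 ⟨h1.2.1, h1.2.2.1⟩
  have hmain : Nat.card {X : Matrix (Fin 2) (Fin 2) F // X * X = a • X} =
      4 + (2 * (2 * (Fintype.card F - 1)) + (Fintype.card F - 2) * (Fintype.card F - 1)) := by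
    rw [← Nat.card_congr eA, hsplit, card_P1 a ha, card_P2 a ha]
  have hq : 2 ≤ Fintype.card F := Fintype.one_lt_card
  obtain ⟨r, hr⟩ : ∃ r, Fintype.card F = r + 2 := ⟨Fintype.card F - 2, by omega⟩
  have : Nat.card {X : Matrix (Fin 2) (Fin 2) F | X * X = a • X} =
      Nat.card {X : Matrix (Fin 2) (Fin 2) F // X * X = a • X} := rfl
  rw [this, hmain, hr]
  have e1 : r + 2 - 1 = r + 1 := by omega
  have e2 : r + 2 - 2 = r := by omega
  rw [e1, e2]
  ring
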